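/- arXiv:2301.05045 — 2 statements merged into one kernel-verified Lean document; each statement's English description precedes it below -/
import Mathlib

section
/- Let Φ be a frame for ℝ^n and T an invertible operator on ℝ^n. Then a dual frame G of TΦ does phase retrieval if and only if T*G (a dual frame of Φ) does phase retrieval; equivalently PD_{TΦ} = (T*)^{-1} PD_Φ. -/
variable {n m : ℕ}

/-- `ψ` is a dual frame of `φ` in `ℝ^n`. -/
def IsDualFrame (φ ψ : Fin m → EuclideanSpace ℝ (Fin n)) : Prop :=
  ∀ f : EuclideanSpace ℝ (Fin n), ∑ i, (inner ℝ (ψ i) f : ℝ) • φ i = f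

/-- Phase retrieval in `ℝ^n`. -/
def DoesPhaseRetrieval (ψ : Fin m → EuclideanSpace ℝ (Fin n)) : Prop :=
  ∀ x y : EuclideanSpace ℝ (Fin n),
    (∀ i, |(inner ℝ x (ψ i) : ℝ)| = |(inner ℝ y (ψ i) : ℝ)|) → x = y ∨ x = -y

/-- for a frame `φ` of `ℝ^n`, invertible `T` and a dual frame `G`
of `TΦ`, the family `T*G` is a dual frame of `Φ` and `G` does phase retrieval
iff `T*G` does; equivalently `PD_{TΦ} = (T*)⁻¹ PD_Φ`. -/
theorem phaseRetrievalDual_of_map (φ : Fin m → EuclideanSpace ℝ (Fin n))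
    (hframe : Submodule.span ℝ (Set.range φ) = ⊤)
    (T : EuclideanSpace ℝ (Fin n) →L[ℝ] EuclideanSpace ℝ (Fin n))
    (hT : IsUnit T) (g : Fin m → EuclideanSpace ℝ (Fin n))
    (hg : IsDualFrame (fun i => T (φ i)) g) :
    IsDualFrame φ (fun i => (ContinuousLinearMap.adjoint T) (g i)) ∧
      (DoesPhaseRetrieval g ↔
        DoesPhaseRetrieval (fun i => (ContinuousLinearMap.adjoint T) (g i))) := by
  obtain ⟨u, rfl⟩ := hT
  have hli : ∀ a, (↑u⁻¹ : EuclideanSpace ℝ (Fin n) →L[ℝ] EuclideanSpace ℝ (Fin n))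
      ((↑u : EuclideanSpace ℝ (Fin n) →L[ℝ] EuclideanSpace ℝ (Fin n)) a) = a := by
    intro a
    have h := u.inv_mul
    calc (↑u⁻¹ : EuclideanSpace ℝ (Fin n) →L[ℝ] EuclideanSpace ℝ (Fin n)) ((↑u :
          EuclideanSpace ℝ (Fin n) →L[ℝ] EuclideanSpace ℝ (Fin n)) a)
        = ((↑u⁻¹ * ↑u : EuclideanSpace ℝ (Fin n) →L[ℝ] EuclideanSpace ℝ (Fin n))) a := rfl
      _ = a := by rw [h]; rfl
  have hri : ∀ a, (↑u : EuclideanSpace ℝ (Fin n) →L[ℝ] EuclideanSpace ℝ (Fin n))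
      ((↑u⁻¹ : EuclideanSpace ℝ (Fin n) →L[ℝ] EuclideanSpace ℝ (Fin n)) a) = a := by
    intro a
    have h := u.mul_inv
    calc (↑u : EuclideanSpace ℝ (Fin n) →L[ℝ] EuclideanSpace ℝ (Fin n)) ((↑u⁻¹ :
          EuclideanSpace ℝ (Fin n) →L[ℝ] EuclideanSpace ℝ (Fin n)) a)
        = ((↑u * ↑u⁻¹ : EuclideanSpace ℝ (Fin n) →L[ℝ] EuclideanSpace ℝ (Fin n))) a := rfl
      _ = a := by rw [h]; rfl
  have hinj : Function.Injective
      (↑u : EuclideanSpace ℝ (Fin n) →L[ℝ] EuclideanSpace ℝ (Fin n)) := by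
    intro a b h
    rw [← hli a, h, hli]
  have hdual : IsDualFrame φ (fun i => (ContinuousLinearMap.adjoint
      (↑u : EuclideanSpace ℝ (Fin n) →L[ℝ] EuclideanSpace ℝ (Fin n))) (g i)) := by
    intro f
    apply hinj
    rw [map_sum]
    simp only [map_smul, ContinuousLinearMap.adjoint_inner_left]
    exact hg ((↑u : EuclideanSpace ℝ (Fin n) →L[ℝ] EuclideanSpace ℝ (Fin n)) f)
  refine ⟨hdual, ?_⟩
  constructor
  · intro hpr x y h
    have h' : ∀ i, |(inner ℝ ((↑u : EuclideanSpace ℝ (Fin n) →L[ℝ] EuclideanSpace ℝ (Fin n)) x)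
        (g i) : ℝ)| = |(inner ℝ ((↑u : EuclideanSpace ℝ (Fin n) →L[ℝ]
        EuclideanSpace ℝ (Fin n)) y) (g i) : ℝ)| := by
      intro i
      have := h i
      simpa only [ContinuousLinearMap.adjoint_inner_right] using this
    rcases hpr _ _ h' with h2 | h2
    · left; exact hinj h2
    · right
      apply hinj
      rw [map_neg]; exact h2
  · intro hpr x y h
    have h' : ∀ i, |(inner ℝ ((↑u⁻¹ : EuclideanSpace ℝ (Fin n) →L[ℝ] EuclideanSpace ℝ (Fin n)) x)
        ((ContinuousLinearMap.adjoint (↑u : EuclideanSpace ℝ (Fin n) →L[ℝ]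
          EuclideanSpace ℝ (Fin n))) (g i)) : ℝ)|
        = |(inner ℝ ((↑u⁻¹ : EuclideanSpace ℝ (Fin n) →L[ℝ] EuclideanSpace ℝ (Fin n)) y)
        ((ContinuousLinearMap.adjoint (↑u : EuclideanSpace ℝ (Fin n) →L[ℝ]
          EuclideanSpace ℝ (Fin n))) (g i)) : ℝ)| := by
      intro i
      rw [ContinuousLinearMap.adjoint_inner_right, ContinuousLinearMap.adjoint_inner_right,
        hri, hri]
      exact h i
    rcases hpr _ _ h' with h2 | h2
    · left
      rw [← hri x, h2, hri]
    · right
      rw [← hri x, h2, map_neg, hri]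
end

section
/- Let Φ = {φ_1, ..., φ_{2n-1}} be a phase retrieval frame in ℝ^n. Then the set PD_Φ of dual frames of Φ that do phase retrieval is open and dense in the set D_Φ of all dual frames of Φ, with respect to the metric d(G, H) = Σ_{i=1}^{2n-1} ‖g_i - h_i‖. -/
variable {n m : ℕ}

/-- every `n` of the vectors span. -/
def FullSpark (h : Fin m → EuclideanSpace ℝ (Fin n)) : Prop :=
  ∀ e : Fin n → Fin m, Function.Injective e →
    Submodule.span ℝ (Set.range (h ∘ e)) = ⊤

lemma eq_zero_of_inner_span {k : ℕ} {v : Fin k → EuclideanSpace ℝ (Fin n)}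
    (hv : Submodule.span ℝ (Set.range v) = ⊤) {u : EuclideanSpace ℝ (Fin n)}
    (hu : ∀ j, (inner ℝ u (v j) : ℝ) = 0) : u = 0 := by
  have h : ∀ w ∈ Submodule.span ℝ (Set.range v), (inner ℝ u w : ℝ) = 0 := by
    intro w hw
    induction hw using Submodule.span_induction with
    | mem w hw => obtain ⟨j, rfl⟩ := hw; exact hu j
    | zero => simp
    | add a b _ _ ha hb => rw [inner_add_right, ha, hb, add_zero]
    | smul c a _ ha => rw [real_inner_smul_right, ha, mul_zero]
  have h2 := h u (by rw [hv]; trivial)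
  rwa [real_inner_self_eq_norm_sq, pow_eq_zero_iff, norm_eq_zero] at h2
  norm_num


lemma span_top_iff_det (v : Fin n → EuclideanSpace ℝ (Fin n)) :
    Submodule.span ℝ (Set.range v) = ⊤ ↔
      (Matrix.of fun i j : Fin n => v j i).det ≠ 0 := by
  set b := (EuclideanSpace.basisFun (Fin n) ℝ).toBasis with hb
  have hcard : Fintype.card (Fin n) = Module.finrank ℝ (EuclideanSpace ℝ (Fin n)) := by
    simp [finrank_euclideanSpace_fin]
  have hdet : b.det v = (Matrix.of fun i j : Fin n => v j i).det := by
    rw [Module.Basis.det_apply]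
    congr 1
  constructor
  · intro hspan
    have hli : LinearIndependent ℝ v :=
      linearIndependent_of_top_le_span_of_card_eq_finrank hspan.ge hcard
    have := (Module.Basis.is_basis_iff_det b).mp ⟨hli, hspan⟩
    rw [hdet] at this
    exact this.ne_zero
  · intro hne
    have : IsUnit (b.det v) := by rw [hdet]; exact isUnit_iff_ne_zero.mpr hne
    exact ((Module.Basis.is_basis_iff_det b).mpr this).2

lemma doesPR_of_fullSpark {h : Fin (2 * n - 1) → EuclideanSpace ℝ (Fin n)}
    (hFS : FullSpark h) : DoesPhaseRetrieval h := by
  classical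
  intro x y hxy
  set S : Finset (Fin (2 * n - 1)) :=
    Finset.univ.filter (fun i => (inner ℝ (x - y) (h i) : ℝ) = 0) with hSdef
  by_cases hcard : n ≤ S.card
  · left
    obtain ⟨T, hTS, hT⟩ := Finset.exists_subset_card_eq hcard
    let e : Fin n → Fin (2 * n - 1) := fun j => (T.equivFin.symm (Fin.cast hT.symm j)).1
    have he : Function.Injective e := by
      intro a b hab
      have := T.equivFin.symm.injective (Subtype.ext hab)
      simpa [Fin.ext_iff] using this
    have hmem : ∀ j, e j ∈ S := fun j => hTS (T.equivFin.symm (Fin.cast hT.symm j)).2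
    have hu : ∀ j, (inner ℝ (x - y) ((h ∘ e) j) : ℝ) = 0 := by
      intro j
      have := hmem j
      rw [hSdef, Finset.mem_filter] at this
      exact this.2
    have := eq_zero_of_inner_span (hFS e he) hu
    rw [sub_eq_zero] at this
    exact this
  · right
    have hn : 0 < n := Nat.pos_of_ne_zero (by rintro rfl; omega)
    have hcc : n ≤ Sᶜ.card := by
      rw [Finset.card_compl]
      simp only [Fintype.card_fin]
      omega
    obtain ⟨T, hTS, hT⟩ := Finset.exists_subset_card_eq hcc
    let e : Fin n → Fin (2 * n - 1) := fun j => (T.equivFin.symm (Fin.cast hT.symm j)).1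
    have he : Function.Injective e := by
      intro a b hab
      have := T.equivFin.symm.injective (Subtype.ext hab)
      simpa [Fin.ext_iff] using this
    have hmem : ∀ j, e j ∈ Sᶜ := fun j => hTS (T.equivFin.symm (Fin.cast hT.symm j)).2
    have hu : ∀ j, (inner ℝ (x + y) ((h ∘ e) j) : ℝ) = 0 := by
      intro j
      have hj := hmem j
      rw [Finset.mem_compl, hSdef, Finset.mem_filter] at hj
      have hne : (inner ℝ (x - y) (h (e j)) : ℝ) ≠ 0 := fun hc => hj ⟨Finset.mem_univ _, hc⟩
      rcases abs_eq_abs.mp (hxy (e j)) with hcase | hcase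
      · exact absurd (by rw [inner_sub_left, hcase, sub_self]) hne
      · show (inner ℝ (x + y) (h (e j)) : ℝ) = 0
        rw [inner_add_left, hcase, neg_add_cancel]
    have := eq_zero_of_inner_span (hFS e he) hu
    rw [add_eq_zero_iff_eq_neg] at this
    exact this

lemma fullSpark_of_doesPR {h : Fin (2 * n - 1) → EuclideanSpace ℝ (Fin n)}
    (hPR : DoesPhaseRetrieval h) : FullSpark h := by
  classical
  rcases Nat.eq_zero_or_pos n with rfl | hn
  · intro e he
    haveI : Subsingleton (EuclideanSpace ℝ (Fin 0)) :=
      ⟨fun a b => by ext i; exact i.elim0⟩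
    refine Submodule.eq_top_iff'.mpr fun x => ?_
    rw [Subsingleton.elim x 0]
    exact Submodule.zero_mem _
  intro e he
  by_contra hK
  set K := Submodule.span ℝ (Set.range (h ∘ e)) with hKdef
  have hKbot : Kᗮ ≠ ⊥ := fun hbot => hK (Submodule.orthogonal_eq_bot_iff.mp hbot)
  obtain ⟨u, huK, hu0⟩ := Submodule.ne_bot_iff _ |>.mp hKbot
  have hu : ∀ j, (inner ℝ u (h (e j)) : ℝ) = 0 := by
    intro j
    have hmem : h (e j) ∈ K := Submodule.subset_span ⟨j, rfl⟩
    rw [real_inner_comm]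
    exact huK _ hmem
  -- the complement vectors
  set A : Finset (EuclideanSpace ℝ (Fin n)) :=
    ((Finset.image e Finset.univ)ᶜ).image h with hAdef
  set K2 := Submodule.span ℝ (A : Set (EuclideanSpace ℝ (Fin n))) with hK2def
  have hK2ne : K2 ≠ ⊤ := by
    intro htop
    have h1 : Module.finrank ℝ K2 ≤ A.card := finrank_span_finset_le_card A
    have h2 : A.card ≤ ((Finset.image e Finset.univ)ᶜ).card := Finset.card_image_le
    have h3 : ((Finset.image e Finset.univ)ᶜ).card = (2 * n - 1) - n := by
      rw [Finset.card_compl, Finset.card_image_of_injective _ he]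
      simp
    rw [htop, finrank_top, finrank_euclideanSpace_fin] at h1
    omega
  have hK2bot : K2ᗮ ≠ ⊥ := fun hbot => hK2ne (Submodule.orthogonal_eq_bot_iff.mp hbot)
  obtain ⟨v, hvK, hv0⟩ := Submodule.ne_bot_iff _ |>.mp hK2bot
  have hv : ∀ i, i ∉ Set.range e → (inner ℝ v (h i) : ℝ) = 0 := by
    intro i hi
    have hmem : h i ∈ K2 := by
      apply Submodule.subset_span
      rw [hAdef]
      refine Finset.mem_coe.mpr (Finset.mem_image.mpr ⟨i, ?_, rfl⟩)
      rw [Finset.mem_compl]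
      intro hc
      obtain ⟨j, _, hj⟩ := Finset.mem_image.mp hc
      exact hi ⟨j, hj⟩
    rw [real_inner_comm]
    exact hvK _ hmem
  have habs : ∀ i, |(inner ℝ (u + v) (h i) : ℝ)| = |(inner ℝ (u - v) (h i) : ℝ)| := by
    intro i
    by_cases hi : i ∈ Set.range e
    · obtain ⟨j, rfl⟩ := hi
      rw [inner_add_left, inner_sub_left, hu j, zero_add, zero_sub, abs_neg]
    · rw [inner_add_left, inner_sub_left, hv i hi, add_zero, sub_zero]
  rcases hPR (u + v) (u - v) habs with hcase | hcase
  · apply hv0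
    have h2v : v + v = (u + v) - (u - v) := by abel
    rw [hcase, sub_self] at h2v
    have := congrArg (fun w => (2⁻¹ : ℝ) • w) h2v.symm
    simpa [smul_add, ← two_smul ℝ v, smul_smul] using this.symm
  · apply hu0
    rw [neg_sub] at hcase
    have h2u : u + u = (u + v) - (v - u) := by abel
    rw [hcase, sub_self] at h2u
    have := congrArg (fun w => (2⁻¹ : ℝ) • w) h2u.symm
    simpa [smul_add, ← two_smul ℝ u, smul_smul] using this.symm

noncomputable def frameOp (φ : Fin m → EuclideanSpace ℝ (Fin n)) :
    EuclideanSpace ℝ (Fin n) →ₗ[ℝ] EuclideanSpace ℝ (Fin n) where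
  toFun f := ∑ i, (inner ℝ (φ i) f : ℝ) • φ i
  map_add' a b := by
    simp only [inner_add_right, add_smul, Finset.sum_add_distrib]
  map_smul' c a := by
    simp only [real_inner_smul_right, RingHom.id_apply, mul_smul, ← Finset.smul_sum]

lemma frameOp_apply (φ : Fin m → EuclideanSpace ℝ (Fin n)) (f : EuclideanSpace ℝ (Fin n)) :
    frameOp φ f = ∑ i, (inner ℝ (φ i) f : ℝ) • φ i := rfl

lemma frameOp_symm (φ : Fin m → EuclideanSpace ℝ (Fin n)) (a b : EuclideanSpace ℝ (Fin n)) :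
    (inner ℝ (frameOp φ a) b : ℝ) = inner ℝ a (frameOp φ b) := by
  rw [frameOp_apply, frameOp_apply, sum_inner, inner_sum]
  refine Finset.sum_congr rfl fun i _ => ?_
  rw [real_inner_smul_left, real_inner_smul_right, real_inner_comm a (φ i)]
  ring

lemma frameOp_bijective (φ : Fin m → EuclideanSpace ℝ (Fin n))
    (hframe : Submodule.span ℝ (Set.range φ) = ⊤) :
    Function.Bijective (frameOp φ) := by
  have hinj : Function.Injective (frameOp φ) := by
    rw [← LinearMap.ker_eq_bot]
    rw [LinearMap.ker_eq_bot']
    intro f hf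
    have h0 : (inner ℝ (frameOp φ f) f : ℝ) = 0 := by rw [hf, inner_zero_left]
    rw [frameOp_apply, sum_inner] at h0
    have hterm : ∀ i ∈ Finset.univ, (0:ℝ) ≤ (inner ℝ ((inner ℝ (φ i) f : ℝ) • φ i) f : ℝ) := by
      intro i _
      rw [real_inner_smul_left, real_inner_comm]
      exact mul_self_nonneg _
    have := (Finset.sum_eq_zero_iff_of_nonneg hterm).mp h0
    refine eq_zero_of_inner_span hframe (fun i => ?_)
    have hi := this i (Finset.mem_univ i)
    rw [real_inner_smul_left, real_inner_comm] at hi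
    exact mul_self_eq_zero.mp hi
  exact ⟨hinj, LinearMap.injective_iff_surjective.mp hinj⟩

noncomputable def canonicalDual (φ : Fin m → EuclideanSpace ℝ (Fin n))
    (hframe : Submodule.span ℝ (Set.range φ) = ⊤) :
    Fin m → EuclideanSpace ℝ (Fin n) :=
  fun i => (LinearEquiv.ofBijective (frameOp φ) (frameOp_bijective φ hframe)).symm (φ i)

lemma canonicalDual_isDual (φ : Fin m → EuclideanSpace ℝ (Fin n))
    (hframe : Submodule.span ℝ (Set.range φ) = ⊤) :
    IsDualFrame φ (canonicalDual φ hframe) := by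
  intro f
  set e := LinearEquiv.ofBijective (frameOp φ) (frameOp_bijective φ hframe) with hedef
  have hef : ∀ x, e x = frameOp φ x := fun _ => rfl
  have key : ∀ i, (inner ℝ (canonicalDual φ hframe i) f : ℝ) = inner ℝ (φ i) (e.symm f) := by
    intro i
    calc (inner ℝ (e.symm (φ i)) f : ℝ)
        = inner ℝ (e.symm (φ i)) (e (e.symm f)) := by rw [e.apply_symm_apply]
      _ = inner ℝ (e.symm (φ i)) (frameOp φ (e.symm f)) := by rw [hef]
      _ = inner ℝ (frameOp φ (e.symm (φ i))) (e.symm f) := (frameOp_symm _ _ _).symm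
      _ = inner ℝ (e (e.symm (φ i))) (e.symm f) := by rw [hef]
      _ = inner ℝ (φ i) (e.symm f) := by rw [e.apply_symm_apply]
  calc ∑ i, (inner ℝ (canonicalDual φ hframe i) f : ℝ) • φ i
      = ∑ i, (inner ℝ (φ i) (e.symm f) : ℝ) • φ i := by
        refine Finset.sum_congr rfl fun i _ => by rw [key]
    _ = frameOp φ (e.symm f) := (frameOp_apply _ _).symm
    _ = e (e.symm f) := rfl
    _ = f := e.apply_symm_apply f

lemma canonicalDual_fullSpark (φ : Fin m → EuclideanSpace ℝ (Fin n))
    (hframe : Submodule.span ℝ (Set.range φ) = ⊤) (hFS : FullSpark φ) :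
    FullSpark (canonicalDual φ hframe) := by
  intro e he
  set S := LinearEquiv.ofBijective (frameOp φ) (frameOp_bijective φ hframe) with hSdef
  have : Set.range (canonicalDual φ hframe ∘ e) = S.symm '' Set.range (φ ∘ e) := by
    rw [← Set.range_comp]
    rfl
  rw [this, ← LinearEquiv.coe_coe, ← Submodule.map_span, hFS e he, Submodule.map_top, LinearEquiv.range]

lemma fullSpark_open {g : Fin (2 * n - 1) → EuclideanSpace ℝ (Fin n)}
    (hg : FullSpark g) :
    ∃ ε > 0, ∀ h : Fin (2 * n - 1) → EuclideanSpace ℝ (Fin n),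
      (∑ i, ‖g i - h i‖) < ε → FullSpark h := by
  classical
  set U : Set (Fin (2 * n - 1) → EuclideanSpace ℝ (Fin n)) :=
    ⋂ e : Fin n → Fin (2 * n - 1),
      {h | Function.Injective e → (Matrix.of fun i j : Fin n => (h ∘ e) j i).det ≠ 0}
    with hUdef
  have hUopen : IsOpen U := by
    refine isOpen_iInter_of_finite fun e => ?_
    by_cases he : Function.Injective e
    · have heq : {h : Fin (2 * n - 1) → EuclideanSpace ℝ (Fin n) |
          Function.Injective e → (Matrix.of fun i j : Fin n => (h ∘ e) j i).det ≠ 0}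
          = (fun h : Fin (2 * n - 1) → EuclideanSpace ℝ (Fin n) =>
              (Matrix.of fun i j : Fin n => (h ∘ e) j i).det) ⁻¹' {(0:ℝ)}ᶜ := by
        ext h; simp [he]
      rw [heq]
      refine IsOpen.preimage ?_ isOpen_compl_singleton
      refine Continuous.matrix_det ?_
      refine continuous_matrix fun i j => ?_
      show Continuous fun h : Fin (2 * n - 1) → EuclideanSpace ℝ (Fin n) => h (e j) i
      exact (EuclideanSpace.proj i (𝕜 := ℝ)).continuous.comp (continuous_apply (e j))
    · have heq : {h : Fin (2 * n - 1) → EuclideanSpace ℝ (Fin n) |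
          Function.Injective e → (Matrix.of fun i j : Fin n => (h ∘ e) j i).det ≠ 0}
          = Set.univ := by
        ext h; simp [he]
      rw [heq]; exact isOpen_univ
  have hgU : g ∈ U := Set.mem_iInter.mpr fun e he => (span_top_iff_det _).mp (hg e he)
  obtain ⟨δ, hδ, hball⟩ := Metric.isOpen_iff.mp hUopen g hgU
  refine ⟨δ, hδ, fun h hsum => ?_⟩
  have hsum0 : (0:ℝ) ≤ ∑ i, ‖g i - h i‖ := Finset.sum_nonneg fun i _ => norm_nonneg _
  have hdist : dist h g ≤ ∑ i, ‖g i - h i‖ := by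
    refine (dist_pi_le_iff hsum0).mpr fun b => ?_
    rw [dist_eq_norm, norm_sub_rev]
    exact Finset.single_le_sum (f := fun i => ‖g i - h i‖)
      (fun i _ => norm_nonneg _) (Finset.mem_univ b)
  have hmem : h ∈ U := hball (Metric.mem_ball.mpr (lt_of_le_of_lt hdist hsum))
  intro e he
  exact (span_top_iff_det _).mpr (Set.mem_iInter.mp hmem e he)

lemma density_aux (φ g gd : Fin (2 * n - 1) → EuclideanSpace ℝ (Fin n))
    (hgdual : IsDualFrame φ g) (hgddual : IsDualFrame φ gd)
    (hgdFS : FullSpark gd) {ε : ℝ} (hε : 0 < ε) :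
    ∃ h : Fin (2 * n - 1) → EuclideanSpace ℝ (Fin n),
      IsDualFrame φ h ∧ FullSpark h ∧ (∑ i, ‖g i - h i‖) < ε := by
  classical
  set C : ℝ := ∑ i, ‖gd i - g i‖ with hCdef
  have hC0 : 0 ≤ C := Finset.sum_nonneg fun i _ => norm_nonneg _
  set δ : ℝ := ε / (C + 1) with hδdef
  have hδ : 0 < δ := div_pos hε (by linarith)
  set P : (Fin n → Fin (2 * n - 1)) → Polynomial ℝ := fun e =>
    (Matrix.of fun i j : Fin n =>
      Polynomial.C (g (e j) i) + Polynomial.X * Polynomial.C (gd (e j) i - g (e j) i)).det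
    with hPdef
  have heval : ∀ (e : Fin n → Fin (2 * n - 1)) (t : ℝ),
      Polynomial.eval t (P e) =
        (Matrix.of fun i j : Fin n =>
          ((g (e j) + t • (gd (e j) - g (e j))) : EuclideanSpace ℝ (Fin n)) i).det := by
    intro e t
    rw [show Polynomial.eval t (P e) = (Polynomial.evalRingHom t) (P e) from rfl,
      hPdef, RingHom.map_det]
    congr 1
    ext i j
    simp [Matrix.map_apply, PiLp.add_apply, PiLp.smul_apply, PiLp.sub_apply, smul_eq_mul]
  have hP1 : ∀ e : Fin n → Fin (2 * n - 1), Function.Injective e → P e ≠ 0 := by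
    intro e he h0
    have h1 := heval e 1
    rw [h0, Polynomial.eval_zero] at h1
    have hsp := (span_top_iff_det (gd ∘ e)).mp (hgdFS e he)
    apply hsp
    have hmat : (Matrix.of fun i j : Fin n =>
        ((g (e j) + (1:ℝ) • (gd (e j) - g (e j))) : EuclideanSpace ℝ (Fin n)) i)
        = Matrix.of fun i j : Fin n => (gd ∘ e) j i := by
      ext i j
      simp
    rw [← hmat, ← h1]
  set Q : Polynomial ℝ :=
    ∏ e ∈ Finset.univ.filter
        (fun e : Fin n → Fin (2 * n - 1) => Function.Injective e), P e with hQdef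
  have hQ : Q ≠ 0 :=
    Finset.prod_ne_zero_iff.mpr fun e hmem => hP1 e ((Finset.mem_filter.mp hmem).2)
  obtain ⟨t, htIoo, htroots⟩ :=
    (Set.Ioo_infinite hδ).exists_notMem_finset Q.roots.toFinset
  obtain ⟨ht0, htδ⟩ := htIoo
  refine ⟨fun i => g i + t • (gd i - g i), ?_, ?_, ?_⟩
  · -- dual frame
    intro f
    have expand : ∀ i : Fin (2 * n - 1),
        (inner ℝ ((g i + t • (gd i - g i)) : EuclideanSpace ℝ (Fin n)) f : ℝ) • φ i
          = (inner ℝ (g i) f : ℝ) • φ i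
            + t • ((inner ℝ (gd i) f : ℝ) • φ i) - t • ((inner ℝ (g i) f : ℝ) • φ i) := by
      intro i
      rw [inner_add_left, real_inner_smul_left, inner_sub_left]
      module
    rw [Finset.sum_congr rfl (fun i _ => expand i)]
    rw [Finset.sum_sub_distrib, Finset.sum_add_distrib, ← Finset.smul_sum, ← Finset.smul_sum,
      hgdual f, hgddual f]
    abel
  · -- full spark
    intro e he
    rw [span_top_iff_det]
    have hmat : (Matrix.of fun i j : Fin n =>
        ((fun i => g i + t • (gd i - g i)) ∘ e) j i)
        = Matrix.of fun i j : Fin n =>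
          ((g (e j) + t • (gd (e j) - g (e j))) : EuclideanSpace ℝ (Fin n)) i := rfl
    rw [hmat, ← heval e t]
    intro hzero
    apply htroots
    rw [Multiset.mem_toFinset, Polynomial.mem_roots hQ]
    show Polynomial.eval t Q = 0
    rw [hQdef, Polynomial.eval_prod]
    refine Finset.prod_eq_zero (Finset.mem_filter.mpr ⟨Finset.mem_univ e, he⟩) hzero
  · -- distance
    have hval : ∑ i, ‖g i - (g i + t • (gd i - g i))‖ = t * C := by
      rw [hCdef, Finset.mul_sum]
      refine Finset.sum_congr rfl fun i _ => ?_
      rw [show g i - (g i + t • (gd i - g i)) = -(t • (gd i - g i)) by abel]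
      rw [norm_neg, norm_smul, Real.norm_eq_abs, abs_of_pos ht0]
    rw [hval]
    have h1 : t * C ≤ t * (C + 1) :=
      mul_le_mul_of_nonneg_left (by linarith) (le_of_lt ht0)
    have h2 : t * (C + 1) < ε := by
      rw [← lt_div_iff₀ (by linarith : (0:ℝ) < C + 1)] at *
      exact htδ
    linarith

/-- if `φ = {φ_1, …, φ_{2n-1}}` is a phase retrieval frame of
`ℝ^n`, then the set of phase retrieval dual frames of `φ` is open and dense
in the set of all dual frames of `φ`, for the metric
`d(G,H) = ∑ i ‖g i - h i‖`. -/
theorem phaseRetrievalDuals_open_dense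
    (φ : Fin (2 * n - 1) → EuclideanSpace ℝ (Fin n))
    (hframe : Submodule.span ℝ (Set.range φ) = ⊤)
    (hPR : DoesPhaseRetrieval φ) :
    -- openness
    (∀ g : Fin (2 * n - 1) → EuclideanSpace ℝ (Fin n),
      IsDualFrame φ g → DoesPhaseRetrieval g →
        ∃ ε > 0, ∀ h : Fin (2 * n - 1) → EuclideanSpace ℝ (Fin n),
          IsDualFrame φ h → (∑ i, ‖g i - h i‖) < ε → DoesPhaseRetrieval h) ∧
    -- density
    (∀ g : Fin (2 * n - 1) → EuclideanSpace ℝ (Fin n),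
      IsDualFrame φ g → ∀ ε > 0,
        ∃ h : Fin (2 * n - 1) → EuclideanSpace ℝ (Fin n),
          IsDualFrame φ h ∧ DoesPhaseRetrieval h ∧ (∑ i, ‖g i - h i‖) < ε) := by
  constructor
  · intro g hgdual hgPR
    obtain ⟨ε, hε, hball⟩ := fullSpark_open (fullSpark_of_doesPR hgPR)
    exact ⟨ε, hε, fun h _ hsum => doesPR_of_fullSpark (hball h hsum)⟩
  · intro g hgdual ε hε
    have hφFS : FullSpark φ := fullSpark_of_doesPR hPR
    obtain ⟨h, h1, h2, h3⟩ := density_aux φ g (canonicalDual φ hframe) hgdual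
      (canonicalDual_isDual φ hframe) (canonicalDual_fullSpark φ hframe hφFS) hε
    exact ⟨h, h1, doesPR_of_fullSpark h2, h3⟩
end
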